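/- Let P(X) = Σ_{i=0}^m A_i X^i be a pseudo-injective polynomial over the permutations with seed g, and let B and X be permutations with X nonempty such that P(X) = B. Then A_0 is a submultiset of B, the difference B' = B − A_0 is nonempty, g divides ℓ(B'), and there exists a divisor d of g coprime with alcm_g ℓ(B') such that the integer d · alcm_g ℓ(B') is an element of X. -/
import Mathlib


/-- Product of permutations (multisets of cycle lengths): each pair `(a, b)` contributes
`gcd(a, b)` copies of `lcm(a, b)`. -/
def pmul (A B : Multiset ℕ) : Multiset ℕ :=
  A.bind fun a => B.bind fun b => Multiset.replicate (Nat.gcd a b) (Nat.lcm a b)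

/-- Powers in the permutation semiring; `X^0` is the singleton `{1}`. -/
def ppow (A : Multiset ℕ) : ℕ → Multiset ℕ
  | 0 => {1}
  | n + 1 => pmul A (ppow A n)

/-- Evaluation of the polynomial `Σ_{i=0}^m A_i X^i` over the permutation semiring. -/
def peval (A : ℕ → Multiset ℕ) (m : ℕ) (X : Multiset ℕ) : Multiset ℕ :=
  (Finset.range (m + 1)).sum fun i => pmul (A i) (ppow X i)

/-- A permutation is a multiset of positive natural numbers (cycle lengths). -/
def IsPerm (A : Multiset ℕ) : Prop := ∀ x ∈ A, 0 < x

/-- `ell X` is the minimum element of the (nonempty) multiset `X`. -/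
noncomputable def ell (X : Multiset ℕ) : ℕ := sInf {x : ℕ | x ∈ X}

/-- The anti-lcm of `b` with respect to `a`: the smallest positive `c` with `lcm(a, c) = b`. -/
noncomputable def alcm (a b : ℕ) : ℕ := sInf {c : ℕ | 0 < c ∧ Nat.lcm a c = b}

/-- `P = Σ_{i=0}^m A_i X^i` is pseudo-injective with seed `g`: `g` occurs as an element of
some non-constant coefficient and divides every element of every non-constant coefficient
(hence `g` is the minimum element occurring among the non-constant coefficients). -/
def PseudoInjective (A : ℕ → Multiset ℕ) (m g : ℕ) : Prop :=
  (∃ i, 1 ≤ i ∧ i ≤ m ∧ g ∈ A i) ∧ ∀ i, 1 ≤ i → i ≤ m → ∀ x ∈ A i, g ∣ x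

lemma mem_pmul {A B : Multiset ℕ} {z : ℕ} :
    z ∈ pmul A B ↔ ∃ a ∈ A, ∃ b ∈ B, Nat.gcd a b ≠ 0 ∧ z = Nat.lcm a b := by
  simp [pmul, Multiset.mem_bind, Multiset.mem_replicate]

lemma ppow_isPerm {X : Multiset ℕ} (hX : IsPerm X) : ∀ n, IsPerm (ppow X n)
  | 0 => by
    intro x hx
    simp only [ppow, Multiset.mem_singleton] at hx
    omega
  | n + 1 => by
    intro x hx
    rw [ppow] at hx
    obtain ⟨a, ha, b, hb, _, rfl⟩ := mem_pmul.mp hx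
    exact Nat.pos_of_ne_zero (Nat.lcm_ne_zero (hX a ha).ne' (ppow_isPerm hX n b hb).ne')

lemma self_mem_ppow {X : Multiset ℕ} (hX : IsPerm X) {x : ℕ} (hx : x ∈ X) :
    ∀ n, 1 ≤ n → x ∈ ppow X n
  | 1, _ => by
    rw [ppow]
    exact mem_pmul.mpr ⟨x, hx, 1, by simp [ppow], by simp [Nat.gcd_one_right, Nat.lcm_one_right]⟩
  | n + 2, _ => by
    rw [ppow]
    exact mem_pmul.mpr ⟨x, hx, x, self_mem_ppow hX hx (n+1) (by omega),
      by simp [Nat.gcd_self, Nat.lcm_self, (hX x hx).ne']⟩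

lemma exists_dvd_of_mem_ppow {X : Multiset ℕ} {y n : ℕ} (hy : y ∈ ppow X (n + 1)) :
    ∃ x ∈ X, x ∣ y := by
  rw [ppow] at hy
  obtain ⟨a, ha, b, hb, _, rfl⟩ := mem_pmul.mp hy
  exact ⟨a, ha, Nat.dvd_lcm_left a b⟩

lemma pmul_one (A : Multiset ℕ) : pmul A {1} = A := by
  simp only [pmul, Multiset.singleton_bind, Nat.gcd_one_right, Nat.lcm_one_right,
    Multiset.replicate_one]
  exact (Multiset.bind_singleton A id).trans (Multiset.map_id A)

lemma lcm_gcd_distrib {a b c : ℕ} (ha : a ≠ 0) (hb : b ≠ 0) (hc : c ≠ 0) :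
    Nat.lcm a (Nat.gcd b c) = Nat.gcd (Nat.lcm a b) (Nat.lcm a c) := by
  have hg : Nat.gcd b c ≠ 0 := Nat.gcd_ne_zero_left hb
  have h1 : Nat.lcm a b ≠ 0 := Nat.lcm_ne_zero ha hb
  have h2 : Nat.lcm a c ≠ 0 := Nat.lcm_ne_zero ha hc
  apply Nat.eq_of_factorization_eq (Nat.lcm_ne_zero ha hg) (Nat.gcd_ne_zero_left h1)
  intro p
  rw [Nat.factorization_lcm ha hg, Nat.factorization_gcd h1 h2,
    Nat.factorization_lcm ha hb, Nat.factorization_lcm ha hc, Nat.factorization_gcd hb hc]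
  simp only [Finsupp.sup_apply, Finsupp.inf_apply]
  omega

lemma alcm_key {g x : ℕ} (hg : 0 < g) (hx : 0 < x) :
    ∃ d : ℕ, d ∣ g ∧ Nat.Coprime d (alcm g (Nat.lcm g x)) ∧ d * alcm g (Nat.lcm g x) = x := by
  have hgn : g ≠ 0 := hg.ne'
  have hxn : x ≠ 0 := hx.ne'
  set ℓ := Nat.lcm g x with hℓ
  have hℓn : ℓ ≠ 0 := Nat.lcm_ne_zero hgn hxn
  have hxS : x ∈ {c : ℕ | 0 < c ∧ Nat.lcm g c = ℓ} := ⟨hx, rfl⟩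
  have hLmem : alcm g ℓ ∈ {c : ℕ | 0 < c ∧ Nat.lcm g c = ℓ} := Nat.sInf_mem ⟨x, hxS⟩
  set L := alcm g ℓ with hLdef
  obtain ⟨hLpos, hLlcm⟩ := hLmem
  have hLn : L ≠ 0 := hLpos.ne'
  -- L divides x
  have hLx : L ∣ x := by
    have hgcdS : Nat.gcd L x ∈ {c : ℕ | 0 < c ∧ Nat.lcm g c = ℓ} := by
      refine ⟨Nat.gcd_pos_of_pos_left x hLpos, ?_⟩
      rw [lcm_gcd_distrib hgn hLn hxn, hLlcm, ← hℓ, Nat.gcd_self]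
    have hle : L ≤ Nat.gcd L x := Nat.sInf_le hgcdS
    have heq : Nat.gcd L x = L :=
      Nat.le_antisymm (Nat.le_of_dvd hLpos (Nat.gcd_dvd_left L x)) hle
    exact heq ▸ Nat.gcd_dvd_right L x
  -- factorization facts
  have hLxf : L.factorization ≤ x.factorization :=
    (Nat.factorization_le_iff_dvd hLn hxn).mpr hLx
  have hℓf : ∀ p, ℓ.factorization p = max (g.factorization p) (L.factorization p) := by
    intro p
    rw [← hLlcm, Nat.factorization_lcm hgn hLn]
    simp [Finsupp.sup_apply]
  have hxℓ : ∀ p, x.factorization p ≤ ℓ.factorization p := by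
    intro p
    rw [hℓ, Nat.factorization_lcm hgn hxn]
    simp [Finsupp.sup_apply]
  -- minimality: primes in L exceed g
  have hmin : ∀ p : ℕ, p.Prime → 0 < L.factorization p →
      g.factorization p < L.factorization p := by
    intro p hp hpL
    by_contra hle
    push_neg at hle
    set c := ordCompl[p] L with hc
    have hcpos : 0 < c := Nat.ordCompl_pos p hLn
    have hclt : c < L :=
      Nat.div_lt_self hLpos (Nat.one_lt_pow hpL.ne' hp.one_lt)
    have hcS : c ∈ {c : ℕ | 0 < c ∧ Nat.lcm g c = ℓ} := by
      refine ⟨hcpos, ?_⟩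
      apply Nat.eq_of_factorization_eq (Nat.lcm_ne_zero hgn hcpos.ne') hℓn
      intro q
      rw [Nat.factorization_lcm hgn hcpos.ne', hc, Nat.factorization_ordCompl L p]
      simp only [Finsupp.sup_apply, Finsupp.erase_apply]
      rcases eq_or_ne q p with rfl | hqp
      · rw [if_pos rfl, hℓf q]
        omega
      · rw [if_neg hqp, hℓf q]
    exact absurd (Nat.sInf_le hcS) (not_le.mpr hclt)
  -- define d
  refine ⟨x / L, ?_, ?_, Nat.div_mul_cancel hLx⟩
  · -- d ∣ g
    have hdn : x / L ≠ 0 := by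
      have := Nat.div_mul_cancel hLx
      intro h0; rw [h0, zero_mul] at this; exact hxn this.symm
    rw [← Nat.factorization_le_iff_dvd hdn hgn]
    intro p
    rw [Nat.factorization_div hLx, Finsupp.tsub_apply]
    by_cases hp : p.Prime
    · by_cases h0 : 0 < L.factorization p
      · have h1 := hmin p hp h0
        have h2 := hxℓ p
        have h3 := hℓf p
        have h4 := hLxf p
        omega
      · have h2 := hxℓ p
        have h3 := hℓf p
        omega
    · rw [Nat.factorization_eq_zero_of_not_prime x hp]
      omega
  · -- coprime
    rw [Nat.coprime_iff_gcd_eq_one]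
    by_contra hne
    obtain ⟨p, hp, hpd⟩ := Nat.exists_prime_and_dvd hne
    have hpdL : p ∣ L := hpd.trans (Nat.gcd_dvd_right _ _)
    have hpdd : p ∣ x / L := hpd.trans (Nat.gcd_dvd_left _ _)
    have hdn : x / L ≠ 0 := by
      have := Nat.div_mul_cancel hLx
      intro h0; rw [h0, zero_mul] at this; exact hxn this.symm
    have h0 : 0 < L.factorization p := hp.factorization_pos_of_dvd hLn hpdL
    have h1 := hmin p hp h0
    have h2 := hxℓ p
    have h3 := hℓf p
    have h4 := hLxf p
    have h5 : 0 < (x / L).factorization p := hp.factorization_pos_of_dvd hdn hpdd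
    rw [Nat.factorization_div hLx, Finsupp.tsub_apply] at h5
    omega
/-- let `P(X) = Σ_{i=0}^m A_i X^i` be pseudo-injective with seed `g`, and let
`X` be a nonempty permutation with `P(X) = B`. Then `A_0` is a submultiset of `B`, the
difference `B' = B − A_0` is nonempty, `g ∣ ℓ(B')`, and some divisor `d` of `g` coprime
with `alcm_g ℓ(B')` is such that `d · alcm_g ℓ(B')` is an element of `X`. -/
theorem detach_cycle_poly (A : ℕ → Multiset ℕ) (m g : ℕ) (hA : ∀ i ≤ m, IsPerm (A i))
    (hpi : PseudoInjective A m g) (B X : Multiset ℕ) (hB : IsPerm B) (hX : IsPerm X)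
    (hXne : X ≠ 0) (heq : peval A m X = B) :
    A 0 ≤ B ∧ B - A 0 ≠ 0 ∧ g ∣ ell (B - A 0) ∧
    ∃ d : ℕ, d ∣ g ∧ Nat.Coprime d (alcm g (ell (B - A 0))) ∧
      d * alcm g (ell (B - A 0)) ∈ X := by
  obtain ⟨⟨j, hj1, hjm, hgAj⟩, hdvd⟩ := hpi
  have hg : 0 < g := hA j hjm g hgAj
  set R : Multiset ℕ := (Finset.range m).sum fun i => pmul (A (i + 1)) (ppow X (i + 1)) with hRdef
  have hsum : B = R + A 0 := by
    rw [← heq, peval, Finset.sum_range_succ']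
    congr 1
    exact (pmul_one (A 0)).symm ▸ rfl
  have hA0le : A 0 ≤ B := hsum ▸ le_add_self
  have hBsub : B - A 0 = R := by
    ext a
    rw [hsum, Multiset.count_sub, Multiset.count_add, Nat.add_sub_cancel]
  have hmemR : ∀ z, z ∈ R ↔ ∃ i, i < m ∧ z ∈ pmul (A (i + 1)) (ppow X (i + 1)) := by
    intro z
    simp [hRdef, Multiset.mem_sum, Finset.mem_range]
  obtain ⟨x1, hx1⟩ := Multiset.exists_mem_of_ne_zero hXne
  have hgx_mem : ∀ x ∈ X, Nat.lcm g x ∈ R := by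
    intro x hx
    refine (hmemR _).mpr ⟨j - 1, by omega, ?_⟩
    have hj' : j - 1 + 1 = j := by omega
    rw [hj']
    exact mem_pmul.mpr ⟨g, hgAj, x, self_mem_ppow hX hx j hj1,
      Nat.pos_iff_ne_zero.mp (Nat.gcd_pos_of_pos_left x hg), rfl⟩
  have hRne : R ≠ 0 := by
    intro h0
    have := hgx_mem x1 hx1
    rw [h0] at this
    exact absurd this (Multiset.notMem_zero _)
  have hellmem : ell R ∈ R := by
    obtain ⟨z, hz⟩ := Multiset.exists_mem_of_ne_zero hRne
    have : ell R ∈ {x : ℕ | x ∈ R} := Nat.sInf_mem ⟨z, show z ∈ {x : ℕ | x ∈ R} from hz⟩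
    exact this
  have helle : ∀ z ∈ R, ell R ≤ z := fun z hz => Nat.sInf_le (show z ∈ {x : ℕ | x ∈ R} from hz)
  have hRfacts : ∀ z ∈ R, 0 < z ∧ g ∣ z ∧ ∃ x ∈ X, Nat.lcm g x ∣ z := by
    intro z hz
    obtain ⟨i, him, hzp⟩ := (hmemR z).mp hz
    obtain ⟨a, ha, y, hy, hgcd, rfl⟩ := mem_pmul.mp hzp
    have hga : g ∣ a := hdvd (i + 1) (by omega) (by omega) a ha
    obtain ⟨x, hxX, hxy⟩ := exists_dvd_of_mem_ppow hy
    have hapos : 0 < a := hA (i + 1) (by omega) a ha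
    have hypos : 0 < y := ppow_isPerm hX (i + 1) y hy
    refine ⟨Nat.pos_of_ne_zero (Nat.lcm_ne_zero hapos.ne' hypos.ne'),
      hga.trans (Nat.dvd_lcm_left a y), x, hxX,
      Nat.lcm_dvd (hga.trans (Nat.dvd_lcm_left a y)) (hxy.trans (Nat.dvd_lcm_right a y))⟩
  obtain ⟨hellpos, hgell, x0, hx0X, hdvdell⟩ := hRfacts (ell R) hellmem
  have hx0pos : 0 < x0 := hX x0 hx0X
  have helleq : Nat.lcm g x0 = ell R :=
    Nat.le_antisymm (Nat.le_of_dvd hellpos hdvdell) (helle _ (hgx_mem x0 hx0X))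
  obtain ⟨d, hd1, hd2, hd3⟩ := alcm_key hg hx0pos
  rw [helleq] at hd2 hd3
  rw [hBsub]
  exact ⟨hA0le, hRne, hgell, d, hd1, hd2, hd3 ▸ hx0X⟩
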